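/- arXiv:2209.01093 — 4 statements merged into one kernel-verified Lean document; each statement's English description precedes it below -/
import Mathlib

section
/- Let G be a finite simple graph with at least one vertex, let l ≥ 4 be an integer, let H ∈ IIM_l(G), let X be the set of level-l vertices of H, and let X̄ = V(H) \ X. Then Σ_{v ∈ X̄} deg_{X̄}(v) ≤ 14 · Σ_{v ∈ X} deg_H(v); equivalently, 2·|E(H[X̄])| ≤ 14 · vol(X), where E(H[X̄]) is the edge set of the induced subgraph of H on X̄ and vol(X) = Σ_{v ∈ X} deg_H(v). -/
/-- Vertex type after `l` IIM steps starting from vertex type `V`: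
at each step every existing vertex gets one new copy. -/
def IterV (V : Type) : ℕ → Type
  | 0 => V
  | l + 1 => IterV V l ⊕ IterV V l

instance iterVFintype {V : Type} [Fintype V] : ∀ l, Fintype (IterV V l)
  | 0 => inferInstanceAs (Fintype V)
  | l + 1 =>
    letI := iterVFintype (V := V) l
    inferInstanceAs (Fintype (IterV V l ⊕ IterV V l))

instance iterVNonempty {V : Type} [Nonempty V] : ∀ l, Nonempty (IterV V l)
  | 0 => inferInstanceAs (Nonempty V)
  | l + 1 =>
    letI := iterVNonempty (V := V) l
    inferInstanceAs (Nonempty (IterV V l ⊕ IterV V l))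

/-- One IIM step: each vertex `v` of `G` gets a new copy (`Sum.inr v`), which is a
clone of `v` (joined to the closed neighborhood of `v`) if `σ v = true`, and an
anticlone of `v` (joined to the complement of the closed neighborhood) if `σ v = false`.
Old vertices (`Sum.inl`) keep the edges of `G`; new vertices form an independent set. -/
def iimStep {V : Type} (G : SimpleGraph V) (σ : V → Bool) : SimpleGraph (V ⊕ V) where
  Adj x y :=
    match x, y with
    | Sum.inl u, Sum.inl v => G.Adj u v
    | Sum.inl u, Sum.inr v =>
        if σ v = true then u = v ∨ G.Adj u v else ¬(u = v ∨ G.Adj u v)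
    | Sum.inr u, Sum.inl v =>
        if σ u = true then v = u ∨ G.Adj v u else ¬(v = u ∨ G.Adj v u)
    | Sum.inr _, Sum.inr _ => False
  symm := ⟨by
    rintro (u | u) (v | v) h
    · exact G.adj_symm h
    · exact h
    · exact h
    · exact h⟩
  loopless := ⟨by
    rintro (u | u) h
    · exact G.irrefl h
    · exact h⟩

/-- The IIM graph after `l` steps starting from `G`, where `σ i` records, for each
vertex existing after `i` steps, whether its copy created at step `i+1` is a clone
(`true`) or an anticlone (`false`).  `IIM_l(G)` is exactly the set of graphs of the
form `iimGraph G σ l` as `σ` varies. -/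
def iimGraph {V : Type} (G : SimpleGraph V) (σ : ∀ i, IterV V i → Bool) :
    ∀ l, SimpleGraph (IterV V l)
  | 0 => G
  | l + 1 => iimStep (iimGraph G σ l) (σ l)

/-- The level (creation step) of a vertex of an IIM graph. -/
def levelOf {V : Type} : ∀ l, IterV V l → ℕ
  | 0, _ => 0
  | l + 1, Sum.inl x => levelOf l x
  | l + 1, Sum.inr _ => l + 1

/-- The (level-0) vertex `x` of the initial graph, viewed as a vertex of the IIM graph
after `l` steps. -/
def liftV {V : Type} (x : V) : ∀ l, IterV V l
  | 0 => x
  | l + 1 => Sum.inl (liftV x l)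


open Finset in
open scoped Classical in
lemma iim_core {α : Type} [Fintype α] (F : SimpleGraph α) (W : Finset α)
    (hWcard : 2 * W.card = Fintype.card α) (hN : 4 ≤ Fintype.card α)
    (hdegW : ∀ w ∈ W, 2 * F.degree w ≤ Fintype.card α)
    (μ : α → ℕ)
    (hμ : ∀ x, min (F.degree x + 1) (Fintype.card α - 1 - F.degree x) ≤ μ x) :
    ∑ x, F.degree x ≤ 14 * ∑ x, μ x := by
  set N := Fintype.card α with hNdef
  have hdle : ∀ x, F.degree x + 1 ≤ N := fun x => F.degree_lt_card_verts x
  set B : Finset α := univ.filter (fun x => 14 * (N - 1) < 15 * F.degree x) with hB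
  have hmem : ∀ x, x ∈ B ↔ 14 * (N - 1) < 15 * F.degree x := by
    intro x; simp [hB]
  have h1 : ∀ x, x ∉ B → F.degree x ≤ 14 * μ x := by
    intro x hx
    have hb : ¬ (14 * (N - 1) < 15 * F.degree x) := fun h => hx ((hmem x).2 h)
    have hm := hμ x; have hd := hdle x
    rcases le_total (F.degree x + 1) (N - 1 - F.degree x) with h | h
    · rw [min_eq_left h] at hm; omega
    · rw [min_eq_right h] at hm; omega
  have hWB : ∀ w ∈ W, w ∉ B := by
    intro w hw hwB
    have h1 := hdegW w hw
    have h2 := (hmem w).1 hwB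
    omega
  have h3 : ∀ w ∈ W, F.degree w ≤ 2 * μ w := by
    intro w hw
    have h2d := hdegW w hw; have hm := hμ w; have hd := hdle w
    rcases le_total (F.degree w + 1) (N - 1 - F.degree w) with h | h
    · rw [min_eq_left h] at hm; omega
    · rw [min_eq_right h] at hm; omega
  have h5 : ∀ b ∈ B, F.degree b ≤ 6 * (W.filter (fun w => F.Adj b w)).card := by
    intro b hb
    have hbW : b ∉ W := fun h => hWB b h hb
    have hsub : F.neighborFinset b ⊆ (W.filter (fun w => F.Adj b w)) ∪ ((univ \ W).erase b) := by
      intro y hy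
      rw [SimpleGraph.mem_neighborFinset] at hy
      by_cases hyW : y ∈ W
      · exact mem_union_left _ (mem_filter.2 ⟨hyW, hy⟩)
      · refine mem_union_right _ (mem_erase.2 ⟨?_, mem_sdiff.2 ⟨mem_univ y, hyW⟩⟩)
        rintro rfl; exact F.irrefl hy
    have hcard := card_le_card hsub
    have hcard2 := card_union_le (W.filter (fun w => F.Adj b w)) ((univ \ W).erase b)
    have hdb : (F.neighborFinset b).card = F.degree b := F.card_neighborFinset_eq_degree b
    have herase : ((univ \ W).erase b).card = N - W.card - 1 := by
      rw [card_erase_of_mem (mem_sdiff.2 ⟨mem_univ b, hbW⟩), card_sdiff_of_subset (subset_univ W), card_univ]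
    have hBb := (hmem b).1 hb
    have hd := hdle b
    omega
  have hdouble : ∑ b ∈ B, (W.filter (fun w => F.Adj b w)).card ≤ ∑ w ∈ W, F.degree w := by
    have e1 : ∑ b ∈ B, (W.filter (fun w => F.Adj b w)).card
        = ∑ w ∈ W, (B.filter (fun b => F.Adj w b)).card := by
      simp_rw [card_filter]
      rw [Finset.sum_comm]
      refine Finset.sum_congr rfl fun w _ => Finset.sum_congr rfl fun b _ => ?_
      simp [SimpleGraph.adj_comm]
    rw [e1]
    refine Finset.sum_le_sum fun w _ => ?_
    have hsub : B.filter (fun b => F.Adj w b) ⊆ F.neighborFinset w := by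
      intro b hb'; rw [SimpleGraph.mem_neighborFinset]; exact (mem_filter.1 hb').2
    calc (B.filter (fun b => F.Adj w b)).card ≤ (F.neighborFinset w).card := card_le_card hsub
      _ = F.degree w := F.card_neighborFinset_eq_degree w
  -- assemble
  have hWsub : W ⊆ univ \ B := fun w hw => mem_sdiff.2 ⟨mem_univ w, hWB w hw⟩
  have eqd1 : ∑ x ∈ (univ \ B) \ W, F.degree x + ∑ x ∈ W, F.degree x
      = ∑ x ∈ univ \ B, F.degree x := Finset.sum_sdiff hWsub
  have eqd2 : ∑ x ∈ univ \ B, F.degree x + ∑ x ∈ B, F.degree x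
      = ∑ x ∈ univ, F.degree x := Finset.sum_sdiff (subset_univ B)
  have eqm1 : ∑ x ∈ (univ \ B) \ W, μ x + ∑ x ∈ W, μ x
      = ∑ x ∈ univ \ B, μ x := Finset.sum_sdiff hWsub
  have eqm2 : ∑ x ∈ univ \ B, μ x ≤ ∑ x ∈ univ, μ x :=
    Finset.sum_le_sum_of_subset (sdiff_subset)
  have b1 : ∑ x ∈ (univ \ B) \ W, F.degree x ≤ 14 * ∑ x ∈ (univ \ B) \ W, μ x := by
    rw [Finset.mul_sum]
    refine Finset.sum_le_sum fun x hx => ?_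
    exact h1 x (fun hxB => ((mem_sdiff.1 hx).2 : x ∉ W) (absurd hxB (mem_sdiff.1 (mem_sdiff.1 hx).1).2))
  have b2 : ∑ x ∈ W, F.degree x ≤ 2 * ∑ x ∈ W, μ x := by
    rw [Finset.mul_sum]; exact Finset.sum_le_sum h3
  have b3 : ∑ x ∈ B, F.degree x ≤ 6 * ∑ w ∈ W, F.degree w := by
    calc ∑ x ∈ B, F.degree x ≤ ∑ b ∈ B, 6 * (W.filter (fun w => F.Adj b w)).card :=
          Finset.sum_le_sum h5
      _ = 6 * ∑ b ∈ B, (W.filter (fun w => F.Adj b w)).card := by rw [Finset.mul_sum]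
      _ ≤ 6 * ∑ w ∈ W, F.degree w := Nat.mul_le_mul_left 6 hdouble
  omega


lemma levelOf_le {V : Type} : ∀ (k : ℕ) (x : IterV V k), levelOf k x ≤ k
  | 0, _ => le_refl 0
  | k + 1, Sum.inl x => (levelOf_le k x).trans (Nat.le_succ k)
  | _ + 1, Sum.inr _ => le_refl _

lemma card_iterV (V : Type) [Fintype V] : ∀ k, Fintype.card (IterV V k) = 2 ^ k * Fintype.card V
  | 0 => by simp [IterV]; rfl
  | k + 1 => by
    have h : Fintype.card (IterV V (k+1)) = Fintype.card (IterV V k) + Fintype.card (IterV V k) :=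
      Fintype.card_sum
    rw [h, card_iterV V k]; ring

open Finset in
open scoped Classical in
lemma filter_level_ne {V : Type} [Fintype V] (k : ℕ) :
    (univ.filter (fun v : IterV V (k + 2) => levelOf (k + 2) v ≠ (k + 2)))
      = univ.map ⟨Sum.inl, Sum.inl_injective⟩ := by
  ext v
  cases v with
  | inl x =>
    have hlvl : levelOf (k+2) (Sum.inl x : IterV V (k+1) ⊕ IterV V (k+1)) = levelOf (k+1) x := rfl
    have hle := levelOf_le (k+1) x
    exact ⟨fun _ => mem_map.2 ⟨x, mem_univ _, rfl⟩,
      fun _ => mem_filter.2 ⟨mem_univ _, by show levelOf (k+1) x ≠ k+2; omega⟩⟩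
  | inr x =>
    have hlvl : levelOf (k+2) (Sum.inr x : IterV V (k+1) ⊕ IterV V (k+1)) = k + 2 := rfl
    constructor
    · intro h; exact absurd rfl (mem_filter.1 h).2
    · intro h
      obtain ⟨a, -, h⟩ := mem_map.1 h
      exact absurd h (fun hh => Sum.inl_ne_inr hh)

open Finset in
open scoped Classical in
lemma filter_level_eq {V : Type} [Fintype V] (k : ℕ) :
    (univ.filter (fun v : IterV V (k + 2) => levelOf (k + 2) v = (k + 2)))
      = univ.map ⟨Sum.inr, Sum.inr_injective⟩ := by
  ext v
  cases v with
  | inl x =>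
    have hlvl : levelOf (k+2) (Sum.inl x : IterV V (k+1) ⊕ IterV V (k+1)) = levelOf (k+1) x := rfl
    have hle := levelOf_le (k+1) x
    constructor
    · intro h; exact absurd (mem_filter.1 h).2 (by show levelOf (k+1) x ≠ k+2; omega)
    · intro h
      obtain ⟨a, -, h⟩ := mem_map.1 h
      exact absurd h (fun hh => Sum.inr_ne_inl hh)
  | inr x =>
    have hlvl : levelOf (k+2) (Sum.inr x : IterV V (k+1) ⊕ IterV V (k+1)) = k + 2 := rfl
    exact ⟨fun _ => mem_map.2 ⟨x, mem_univ _, rfl⟩, fun _ => mem_filter.2 ⟨mem_univ _, rfl⟩⟩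

open Finset in
open scoped Classical in
/-- For `l ≥ 4`, `H ∈ IIM_l(G)`, `X` the set of level-`l` vertices
and `X̄` its complement: `Σ_{v ∈ X̄} deg_{X̄}(v) ≤ 14 · Σ_{v ∈ X} deg_H(v)`, i.e.
`2|E(H[X̄])| ≤ 14 · vol(X)`. -/
theorem stmt1 {V : Type} [Fintype V] [Nonempty V] (G : SimpleGraph V)
    (l : ℕ) (hl : 4 ≤ l) (σ : ∀ i, IterV V i → Bool)
    (H : SimpleGraph (IterV V l)) (hH : H = iimGraph G σ l) :
    ∑ v ∈ univ.filter (fun v : IterV V l => levelOf l v ≠ l),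
        ((H.neighborFinset v).filter (fun u => levelOf l u ≠ l)).card ≤
      14 * ∑ v ∈ univ.filter (fun v : IterV V l => levelOf l v = l), H.degree v := by
  obtain ⟨j, rfl⟩ : ∃ j, l = j + 2 := ⟨l - 2, by omega⟩
  subst hH
  rw [filter_level_ne (V := V) j, filter_level_eq (V := V) j]
  erw [Finset.sum_map, Finset.sum_map]
  set F : SimpleGraph (IterV V (j+1)) := iimGraph G σ (j+1) with hF
  set A : IterV V (j+1) → Bool := σ (j+1) with hA
  -- the inner filtered neighborhoods of old vertices are the F-neighborhoods
  have key1 : ∀ x : IterV V (j+1),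
      (((iimGraph G σ (j+2)).neighborFinset (Sum.inl x)).filter
        (fun u => levelOf (j+2) u ≠ (j+2))).card = F.degree x := by
    intro x
    have hmap : ((iimGraph G σ (j+2)).neighborFinset (Sum.inl x)).filter
        (fun u => levelOf (j+2) u ≠ (j+2))
        = (F.neighborFinset x).map ⟨Sum.inl, Sum.inl_injective⟩ := by
      ext y
      cases y with
      | inl u =>
        have h1 : (iimGraph G σ (j+2)).Adj (Sum.inl x) (Sum.inl u) ↔ F.Adj x u := Iff.rfl
        have h2 : levelOf (j+2) (Sum.inl u : IterV V (j+1) ⊕ IterV V (j+1)) = levelOf (j+1) u := rfl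
        have h3 := levelOf_le (j+1) u
        constructor
        · intro h
          exact mem_map.2 ⟨u, (SimpleGraph.mem_neighborFinset F x u).2 (h1.1
            ((SimpleGraph.mem_neighborFinset (iimGraph G σ (j+2)) _ _).1 (mem_filter.1 h).1)), rfl⟩
        · intro h
          obtain ⟨a, ha, hae⟩ := mem_map.1 h
          have hau : a = u := Sum.inl_injective hae
          subst hau
          exact mem_filter.2 ⟨(SimpleGraph.mem_neighborFinset (iimGraph G σ (j+2)) _ _).2
            (h1.2 ((SimpleGraph.mem_neighborFinset F x a).1 ha)), by show levelOf (j+1) a ≠ j+2; omega⟩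
      | inr u =>
        have h2 : levelOf (j+2) (Sum.inr u : IterV V (j+1) ⊕ IterV V (j+1)) = j + 2 := rfl
        constructor
        · intro h; exact absurd rfl (mem_filter.1 h).2
        · intro h
          obtain ⟨a, -, hae⟩ := mem_map.1 h
          exact absurd hae (fun hh => Sum.inl_ne_inr hh)
    rw [hmap]
    erw [card_map]
    exact F.card_neighborFinset_eq_degree x
  -- degrees of the new (level l) vertices
  have key2 : ∀ x : IterV V (j+1),
      min (F.degree x + 1) (Fintype.card (IterV V (j+1)) - 1 - F.degree x)
        ≤ (iimGraph G σ (j+2)).degree (Sum.inr x) := by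
    intro x
    have hnb : ∀ u : IterV V (j+1), (iimGraph G σ (j+2)).Adj (Sum.inr x) (Sum.inl u)
        = (if A x = true then u = x ∨ F.Adj u x else ¬(u = x ∨ F.Adj u x)) := fun u => rfl
    have hdlt : F.degree x + 1 ≤ Fintype.card (IterV V (j+1)) := F.degree_lt_card_verts x
    have hdeg : (iimGraph G σ (j+2)).degree (Sum.inr x)
        = ((iimGraph G σ (j+2)).neighborFinset (Sum.inr x)).card :=
      ((iimGraph G σ (j+2)).card_neighborFinset_eq_degree _).symm
    rw [hdeg]
    cases hAx : A x with
    | true =>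
      have hmap : (iimGraph G σ (j+2)).neighborFinset (Sum.inr x)
          = (insert x (F.neighborFinset x)).map ⟨Sum.inl, Sum.inl_injective⟩ := by
        ext y
        cases y with
        | inl u =>
          constructor
          · intro hy
            have hadj := (SimpleGraph.mem_neighborFinset _ _ _).1 hy
            rw [hnb u, hAx] at hadj
            simp only [if_true] at hadj
            refine mem_map.2 ⟨u, ?_, rfl⟩
            rcases hadj with rfl | h'
            · exact mem_insert_self _ _
            · exact mem_insert_of_mem ((SimpleGraph.mem_neighborFinset _ _ _).2 h'.symm)
          · intro hy
            obtain ⟨a, ha, hae⟩ := mem_map.1 hy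
            cases hae
            refine (SimpleGraph.mem_neighborFinset _ _ _).2 ?_
            rw [hnb u, hAx]
            simp only [if_true]
            rcases mem_insert.1 ha with rfl | ha'
            · exact Or.inl rfl
            · exact Or.inr ((SimpleGraph.mem_neighborFinset _ _ _).1 ha').symm
        | inr u =>
          constructor
          · intro hy
            exact absurd ((SimpleGraph.mem_neighborFinset _ _ _).1 hy) (fun h => h)
          · intro hy
            obtain ⟨a, -, hae⟩ := mem_map.1 hy
            exact absurd hae (fun hh => Sum.inl_ne_inr hh)
      rw [hmap]
      erw [card_map]
      rw [card_insert_of_notMem (SimpleGraph.notMem_neighborFinset_self F x),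
        F.card_neighborFinset_eq_degree]
      exact min_le_left _ _
    | false =>
      have hmap : (iimGraph G σ (j+2)).neighborFinset (Sum.inr x)
          = ((univ \ insert x (F.neighborFinset x)).map ⟨Sum.inl, Sum.inl_injective⟩) := by
        ext y
        cases y with
        | inl u =>
          constructor
          · intro hy
            have hadj := (SimpleGraph.mem_neighborFinset _ _ _).1 hy
            rw [hnb u, hAx] at hadj
            simp only [Bool.false_eq_true, if_false] at hadj
            refine mem_map.2 ⟨u, mem_sdiff.2 ⟨mem_univ u, ?_⟩, rfl⟩
            intro hu
            rcases mem_insert.1 hu with rfl | hu'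
            · exact hadj (Or.inl rfl)
            · exact hadj (Or.inr ((SimpleGraph.mem_neighborFinset _ _ _).1 hu').symm)
          · intro hy
            obtain ⟨a, ha, hae⟩ := mem_map.1 hy
            cases hae
            refine (SimpleGraph.mem_neighborFinset _ _ _).2 ?_
            rw [hnb u, hAx]
            simp only [Bool.false_eq_true, if_false]
            intro hor
            have hna := (mem_sdiff.1 ha).2
            rcases hor with rfl | h'
            · exact hna (mem_insert_self _ _)
            · exact hna (mem_insert_of_mem ((SimpleGraph.mem_neighborFinset _ _ _).2 h'.symm))
        | inr u =>
          constructor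
          · intro hy
            exact absurd ((SimpleGraph.mem_neighborFinset _ _ _).1 hy) (fun h => h)
          · intro hy
            obtain ⟨a, -, hae⟩ := mem_map.1 hy
            exact absurd hae (fun hh => Sum.inl_ne_inr hh)
      rw [hmap]
      erw [card_map]
      rw [card_sdiff_of_subset (subset_univ _), card_univ,
        card_insert_of_notMem (SimpleGraph.notMem_neighborFinset_self F x),
        F.card_neighborFinset_eq_degree]
      have hmr := min_le_right (F.degree x + 1)
        (Fintype.card (IterV V (j+1)) - 1 - F.degree x)
      omega
  -- the independent half W of F and its properties
  set W : Finset (IterV V (j+1)) := univ.map ⟨Sum.inr, Sum.inr_injective⟩ with hW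
  have hcards : Fintype.card (IterV V (j+1))
      = Fintype.card (IterV V j) + Fintype.card (IterV V j) := Fintype.card_sum
  have hWcard : 2 * W.card = Fintype.card (IterV V (j+1)) := by
    rw [hW, card_map, card_univ]; omega
  have hN4 : 4 ≤ Fintype.card (IterV V (j+1)) := by
    rw [card_iterV]
    have h1 : 1 ≤ Fintype.card V := Fintype.card_pos
    have h2 : (4:ℕ) ≤ 2^(j+1) := by
      calc (4:ℕ) = 2^2 := rfl
        _ ≤ 2^(j+1) := Nat.pow_le_pow_right (by norm_num) (by omega)
    calc (4:ℕ) = 4 * 1 := rfl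
      _ ≤ 2^(j+1) * Fintype.card V := Nat.mul_le_mul h2 h1
  have hdegW : ∀ w ∈ W, 2 * F.degree w ≤ Fintype.card (IterV V (j+1)) := by
    intro w hw
    obtain ⟨y, -, rfl⟩ := mem_map.1 hw
    have hsub : F.neighborFinset (Sum.inr y)
        ⊆ (univ.map ⟨Sum.inl, Sum.inl_injective⟩ : Finset (IterV V (j+1))) := by
      intro z hz
      have hadj := (SimpleGraph.mem_neighborFinset _ _ _).1 hz
      cases z with
      | inl u => exact mem_map.2 ⟨u, mem_univ u, rfl⟩
      | inr u => exact absurd hadj (fun h => h)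
    have hle := card_le_card hsub
    rw [card_map, card_univ] at hle
    have hdd : F.degree ((⟨Sum.inr, Sum.inr_injective⟩ :
        IterV V j ↪ IterV V (j+1)) y) = (F.neighborFinset (Sum.inr y)).card :=
      (F.card_neighborFinset_eq_degree _).symm
    rw [hdd]
    omega
  refine le_trans (le_of_eq (Finset.sum_congr rfl fun x _ => key1 x)) ?_
  exact iim_core F W hWcard hN4 hdegW _ key2
end

section
/- Let G be a finite simple graph that is disconnected (has at least two connected components), and let H ∈ IIM_1(G) be connected. Then diam(H) ≤ 6. -/
namespace Stmt3Aux

open Sum SimpleGraph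

variable {V : Type} {G : SimpleGraph V} {s : V → Bool}

/-- `u` is in the closed neighborhood of `x`. -/
def Nc (G : SimpleGraph V) (x u : V) : Prop := u = x ∨ G.Adj u x

lemma nc_refl (x : V) : Nc G x x := Or.inl rfl

lemma nc_symm {x u : V} (h : Nc G x u) : Nc G u x := by
  rcases h with rfl | h
  · exact Or.inl rfl
  · exact Or.inr h.symm

lemma nc_reach {x u : V} (h : Nc G x u) : G.Reachable x u := by
  rcases h with rfl | h
  · rfl
  · exact h.symm.reachable

-- adjacency unfolding lemmas
lemma adj_inl_inr (u v : V) :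
    (iimStep G s).Adj (inl u) (inr v) ↔ (if s v = true then Nc G v u else ¬ Nc G v u) :=
  Iff.rfl

lemma adj_old {u v : V} (h : G.Adj u v) : (iimStep G s).Adj (inl u) (inl v) := h

lemma adj_clone {u p : V} (hp : s p = true) (h : Nc G p u) :
    (iimStep G s).Adj (inl u) (inr p) := by
  rw [adj_inl_inr, if_pos hp]; exact h

lemma adj_anti {u z : V} (hz : s z = false) (h : ¬ Nc G z u) :
    (iimStep G s).Adj (inl u) (inr z) := by
  rw [adj_inl_inr, if_neg (by simp [hz])]; exact h

lemma of_adj_clone {u p : V} (hp : s p = true) (h : (iimStep G s).Adj (inl u) (inr p)) :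
    Nc G p u := by
  rwa [adj_inl_inr, if_pos hp] at h

lemma of_adj_anti {u z : V} (hz : s z = false) (h : (iimStep G s).Adj (inl u) (inr z)) :
    ¬ Nc G z u := by
  rwa [adj_inl_inr, if_neg (by simp [hz])] at h

lemma not_adj_inr_inr (u v : V) : ¬ (iimStep G s).Adj (inr u) (inr v) := fun h => h

/-- A set closed under adjacency blocks reachability. -/
lemma not_reach_of_closed {W : Type} (H : SimpleGraph W) (S : Set W)
    (hcl : ∀ a ∈ S, ∀ b, H.Adj a b → b ∈ S) {x y : W} (hx : x ∈ S) (hy : y ∉ S) :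
    ¬ H.Reachable x y := by
  have key : ∀ (a b : W), H.Walk a b → a ∈ S → b ∈ S := by
    intro a b w
    induction w with
    | nil => exact id
    | cons hadj p ih => exact fun h => ih (hcl _ h _ hadj)
  exact fun hr => hr.elim fun w => hy (key _ _ w hx)

lemma exN (hG : ¬ G.Preconnected) (x : V) : ∃ a, ¬ Nc G x a := by
  by_contra h
  push_neg at h
  apply hG
  intro u v
  exact (nc_reach (h u)).symm.trans (nc_reach (h v))

/-- Connectivity forces at least one anticlone. -/
lemma A_ne (hG : ¬ G.Preconnected) (hH : (iimStep G s).Connected) :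
    ∃ z, s z = false := by
  by_contra h
  push_neg at h
  simp only [Bool.not_eq_false] at h
  rw [SimpleGraph.Preconnected] at hG
  push_neg at hG
  obtain ⟨u, v, huv⟩ := hG
  have := not_reach_of_closed (iimStep G s)
    (Sum.elim (fun a => G.Reachable u a) (fun p => G.Reachable u p))
    (by
      rintro (a | p) ha (c | q) hadj
      · have hac : G.Adj a c := hadj
        exact ha.trans hac.reachable
      · exact ha.trans (nc_reach (nc_symm (of_adj_clone (h q) hadj)))
      · exact ha.trans (nc_reach (of_adj_clone (h p) ((iimStep G s).adj_symm hadj)))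
      · exact absurd hadj (not_adj_inr_inr _ _))
    (x := inl u) (y := inl v) (Reachable.refl u) huv
  exact this (hH.preconnected _ _)

section Hops

/-- one-step relation: equal or adjacent. -/
def Rh (H : SimpleGraph (V ⊕ V)) (x y : V ⊕ V) : Prop := x = y ∨ H.Adj x y

lemma Rh.symm {H : SimpleGraph (V ⊕ V)} {x y : V ⊕ V} (h : Rh H x y) : Rh H y x := by
  rcases h with rfl | h
  · exact Or.inl rfl
  · exact Or.inr h.symm

lemma rh_old {x u : V} (h : Nc G x u) : Rh (iimStep G s) (inl x) (inl u) := by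
  rcases h with rfl | h
  · exact Or.inl rfl
  · exact Or.inr (adj_old h.symm)

lemma hop {W : Type} {H : SimpleGraph W} {x a y : W} {n : ℕ∞}
    (h1 : x = a ∨ H.Adj x a) (h2 : H.edist a y ≤ n) : H.edist x y ≤ n + 1 := by
  rcases h1 with rfl | h1
  · exact le_trans h2 (self_le_add_right n 1)
  · calc H.edist x y ≤ H.edist x a + H.edist a y := H.edist_triangle
      _ ≤ 1 + n := add_le_add (le_of_eq (edist_eq_one_iff_adj.mpr h1)) h2
      _ = n + 1 := add_comm 1 n

lemma hop0 {W : Type} {H : SimpleGraph W} {x y : W}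
    (h1 : x = y ∨ H.Adj x y) : H.edist x y ≤ 1 := by
  have h2 : H.edist y y ≤ (0 : ℕ∞) := le_of_eq (SimpleGraph.edist_self)
  simpa using hop (H := H) h1 h2

end Hops

section Classify

/-- Every vertex of the one-step IIM graph is either within one hop of an old
vertex lying outside the closed neighborhood of some anticloned vertex (type α),
or within one hop of every anticloned old vertex (type β). -/
lemma classify (hG : ¬ G.Preconnected) (x : V ⊕ V) :
    (∃ b z, Rh (iimStep G s) x (inl b) ∧ s z = false ∧ ¬ Nc G z b) ∨
      (∀ z, s z = false → Rh (iimStep G s) x (inl z)) := by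
  cases x with
  | inl u =>
    by_cases h : ∃ z, s z = false ∧ ¬ Nc G z u
    · obtain ⟨z, hz, hzu⟩ := h
      exact Or.inl ⟨u, z, Or.inl rfl, hz, hzu⟩
    · push_neg at h
      exact Or.inr fun z hz => rh_old (nc_symm (h z hz))
  | inr p =>
    rcases hsp : s p with _ | _
    · -- anticlone
      left
      by_cases h : ∃ b z, ¬ Nc G p b ∧ s z = false ∧ ¬ Nc G z b
      · obtain ⟨b, z, h1, h2, h3⟩ := h
        exact ⟨b, z, Or.inr ((adj_anti hsp h1).symm), h2, h3⟩
      · exfalso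
        push_neg at h
        obtain ⟨a, ha⟩ := exN hG p
        exact ha (h a p ha hsp)
    · -- clone
      by_cases h : ∃ b z, Nc G p b ∧ s z = false ∧ ¬ Nc G z b
      · obtain ⟨b, z, h1, h2, h3⟩ := h
        exact Or.inl ⟨b, z, Or.inr ((adj_clone hsp h1).symm), h2, h3⟩
      · push_neg at h
        refine Or.inr fun z hz => Or.inr ?_
        exact (adj_clone hsp (nc_symm (h p z (nc_refl p) hz))).symm

end Classify

section Pairs

lemma pairBB (hA : ∃ z, s z = false)
    {x y : V ⊕ V}
    (hx : ∀ z, s z = false → Rh (iimStep G s) x (inl z))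
    (hy : ∀ z, s z = false → Rh (iimStep G s) y (inl z)) :
    (iimStep G s).edist x y ≤ 6 := by
  obtain ⟨z, hz⟩ := hA
  exact le_trans (hop (hx z hz) (hop0 ((hy z hz).symm))) (by norm_num)

lemma pairAB (hH : (iimStep G s).Connected)
    {x y : V ⊕ V} {b z1 : V}
    (hxb : Rh (iimStep G s) x (inl b)) (hz1 : s z1 = false) (hz1b : ¬ Nc G z1 b)
    (hy : ∀ z, s z = false → Rh (iimStep G s) y (inl z)) :
    (iimStep G s).edist x y ≤ 6 := by
  by_cases h2a : ∃ zA a zB, s zA = false ∧ ¬ Nc G zA b ∧ ¬ Nc G zA a ∧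
      s zB = false ∧ Nc G zB a
  · obtain ⟨zA, a, zB, hA, hAb, hAa, hB, hBa⟩ := h2a
    exact le_trans (hop hxb (hop (Or.inr (adj_anti hA hAb))
      (hop (Or.inr (adj_anti hA hAa).symm)
        (hop (rh_old (nc_symm hBa)) (hop0 ((hy zB hB).symm)))))) (by norm_num)
  push_neg at h2a
  -- all anticloned vertices have the same closed neighborhood, namely that of z1
  have hzb : ∀ z, s z = false → ¬ Nc G z b := fun z hz => h2a z1 b z hz1 hz1b hz1b hz
  have hEq : ∀ z, s z = false → ∀ a, (Nc G z a ↔ Nc G z1 a) := by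
    intro z hz a
    constructor
    · intro hza
      by_contra hc
      exact h2a z1 a z hz1 hz1b hc hz hza
    · intro h1a
      by_contra hc
      exact h2a z a z1 hz (hzb z hz) hc hz1 h1a
  rw [SimpleGraph.edist_comm]
  by_cases hi : ∃ m a, Nc G z1 m ∧ G.Adj m a ∧ ¬ Nc G z1 a
  · obtain ⟨m, a, hm, hma, hna⟩ := hi
    exact le_trans (hop (hy z1 hz1) (hop (rh_old hm) (hop (Or.inr (adj_old hma))
      (hop (Or.inr (adj_anti hz1 hna)) (hop (Or.inr (adj_anti hz1 hz1b).symm)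
        (hop0 hxb.symm)))))) (by norm_num)
  by_cases hii : ∃ p a, s p = true ∧ Nc G z1 p ∧ Nc G p a ∧ ¬ Nc G z1 a
  · obtain ⟨p, a, hp, hz1p, hpa, hna⟩ := hii
    exact le_trans (hop (hy z1 hz1) (hop (Or.inr (adj_clone hp (nc_symm hz1p)))
      (hop (Or.inr (adj_clone hp hpa).symm)
        (hop (Or.inr (adj_anti hz1 hna)) (hop (Or.inr (adj_anti hz1 hz1b).symm)
          (hop0 hxb.symm)))))) (by norm_num)
  -- otherwise the closed neighborhood of z1 is closed under all adjacencies and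
  -- avoids b, contradicting connectivity
  exfalso
  push_neg at hi hii
  have := not_reach_of_closed (iimStep G s)
    (Sum.elim (fun a => Nc G z1 a) (fun p => s p = true ∧ Nc G z1 p))
    (by
      rintro (a | q) ha (c | q') hadj
      · exact hi a c ha hadj
      · rcases hsq : s q' with _ | _
        · exact absurd ((hEq q' hsq a).mpr ha) (of_adj_anti hsq hadj)
        · refine ⟨hsq, ?_⟩
          rcases of_adj_clone hsq hadj with rfl | hq
          · exact ha
          · exact hi a q' ha hq
      · obtain ⟨hq1, hq2⟩ := ha
        exact hii q c hq1 hq2 (of_adj_clone hq1 ((iimStep G s).adj_symm hadj))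
      · exact absurd hadj (not_adj_inr_inr _ _))
    (x := inl z1) (y := inl b) (nc_refl z1) hz1b
  exact this (hH.preconnected _ _)

lemma pairAA (hG : ¬ G.Preconnected) (hH : (iimStep G s).Connected)
    {x y : V ⊕ V} {b1 z1 b2 z2 : V}
    (hxb : Rh (iimStep G s) x (inl b1)) (hz1 : s z1 = false) (hz1b : ¬ Nc G z1 b1)
    (hyb : Rh (iimStep G s) y (inl b2)) (hz2 : s z2 = false) (hz2b : ¬ Nc G z2 b2) :
    (iimStep G s).edist x y ≤ 6 := by
  by_cases h3a : ∃ z, s z = false ∧ ¬ Nc G z b1 ∧ ¬ Nc G z b2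
  · obtain ⟨z, hz, h1, h2⟩ := h3a
    exact le_trans (hop hxb (hop (Or.inr (adj_anti hz h1))
      (hop (Or.inr (adj_anti hz h2).symm) (hop0 hyb.symm)))) (by norm_num)
  by_cases h3b : ∃ zA zB a, s zA = false ∧ ¬ Nc G zA b1 ∧ s zB = false ∧
      ¬ Nc G zB b2 ∧ ¬ Nc G zA a ∧ ¬ Nc G zB a
  · obtain ⟨zA, zB, a, hA, hAb, hB, hBb, hAa, hBa⟩ := h3b
    exact le_trans (hop hxb (hop (Or.inr (adj_anti hA hAb))
      (hop (Or.inr (adj_anti hA hAa).symm) (hop (Or.inr (adj_anti hB hBa))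
        (hop (Or.inr (adj_anti hB hBb).symm) (hop0 hyb.symm)))))) (by norm_num)
  exfalso
  push_neg at h3a h3b
  -- now z1 and z2 dominate their (distinct) components, which cover V
  have hb2 : Nc G z1 b2 := by
    by_contra hc
    exact hz2b (h3b z1 z2 b2 hz1 hz1b hz2 hz2b hc)
  have hb1 : Nc G z2 b1 := by
    by_contra hc
    exact hz2b (h3a z2 hz2 hc)
  have hnr : ¬ G.Reachable z1 z2 := by
    intro hr
    apply hG
    have aux : ∀ w, G.Reachable z1 w := by
      intro w
      by_cases hw : Nc G z1 w
      · exact nc_reach hw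
      · exact hr.trans (nc_reach (h3b z1 z2 w hz1 hz1b hz2 hz2b hw))
    intro u v
    exact (aux u).symm.trans (aux v)
  have := not_reach_of_closed (iimStep G s)
    (Sum.elim (fun a => G.Reachable z1 a)
      (fun p => (s p = true ∧ G.Reachable z1 p) ∨ (s p = false ∧ G.Reachable z2 p)))
    (by
      rintro (a | q) ha (c | q') hadj
      · have hac : G.Adj a c := hadj
        exact ha.trans hac.reachable
      · rcases hsq : s q' with _ | _
        · -- anticlone neighbor of a vertex in the component of z1
          right
          refine ⟨hsq, ?_⟩
          have hq'a : ¬ Nc G q' a := of_adj_anti hsq hadj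
          have hq'b1 : Nc G q' b1 := by
            by_contra hc
            have hz2a : Nc G z2 a := h3b q' z2 a hsq hc hz2 hz2b hq'a
            exact hnr (ha.trans (nc_reach hz2a).symm)
          exact (nc_reach hb1).trans (nc_reach hq'b1).symm
        · exact Or.inl ⟨hsq, ha.trans (nc_reach (nc_symm (of_adj_clone hsq hadj)))⟩
      · rcases ha with ⟨hsq, hq⟩ | ⟨hsq, hq⟩
        · exact hq.trans (nc_reach (of_adj_clone hsq ((iimStep G s).adj_symm hadj)))
        · have hqc : ¬ Nc G q c := of_adj_anti hsq ((iimStep G s).adj_symm hadj)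
          have hqb2 : ¬ Nc G q b2 := by
            intro hc
            exact hnr (((nc_reach hb2).trans (nc_reach hc).symm).trans hq.symm)
          have hz1c : Nc G z1 c := by
            by_contra hcc
            exact hqc (h3b z1 q c hz1 hz1b hsq hqb2 hcc)
          exact nc_reach hz1c
      · exact absurd hadj (not_adj_inr_inr _ _))
    (x := inl z1) (y := inl z2) (Reachable.refl z1) hnr
  exact this (hH.preconnected _ _)

end Pairs

lemma edist6 (hG : ¬ G.Preconnected) (hH : (iimStep G s).Connected)
    (x y : V ⊕ V) : (iimStep G s).edist x y ≤ 6 := by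
  rcases classify (s := s) hG x with ⟨b1, z1, hxb, hz1, hz1b⟩ | hx
  · rcases classify (s := s) hG y with ⟨b2, z2, hyb, hz2, hz2b⟩ | hy
    · exact pairAA hG hH hxb hz1 hz1b hyb hz2 hz2b
    · exact pairAB hH hxb hz1 hz1b hy
  · rcases classify (s := s) hG y with ⟨b2, z2, hyb, hz2, hz2b⟩ | hy
    · rw [SimpleGraph.edist_comm]
      exact pairAB hH hyb hz2 hz2b hx
    · exact pairBB (A_ne hG hH) hx hy

lemma diam6 (hG : ¬ G.Preconnected) (hH : (iimStep G s).Connected) :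
    (iimStep G s).diam ≤ 6 := by
  have h : (iimStep G s).ediam ≤ (6 : ℕ∞) := ediam_le_of_edist_le (edist6 hG hH)
  have := ENat.toNat_le_toNat h (by norm_num)
  simp at this
  exact this

end Stmt3Aux

/-- If `G` is a disconnected finite graph (at least two connected
components) and `H ∈ IIM_1(G)` is connected, then `diam(H) ≤ 6`. -/
theorem stmt3 {V : Type} [Fintype V] (G : SimpleGraph V)
    (hG : ¬ G.Preconnected)
    (σ : ∀ i, IterV V i → Bool) (hH : (iimGraph G σ 1).Connected) :
    (iimGraph G σ 1).diam ≤ 6 := by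
  have hH' : (iimStep G (σ 0)).Connected := hH
  exact Stmt3Aux.diam6 hG hH'
end

section
/- Let G be a connected finite simple graph with diam(G) ≥ 2, and let H ∈ IIM_1(G) be the graph obtained from G by one IIM step in which every vertex is cloned (the choice function is constantly 'clone'). Then H is connected and diam(H) = diam(G). -/
namespace Stmt7Aux

open SimpleGraph

variable {V : Type}

/-- The all-clone IIM step. -/
def H (G : SimpleGraph V) : SimpleGraph (V ⊕ V) := iimStep G (fun _ => true)

lemma H_adj_ll (G : SimpleGraph V) (u v : V) :
    (H G).Adj (.inl u) (.inl v) ↔ G.Adj u v := Iff.rfl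

lemma H_adj_lr (G : SimpleGraph V) (u v : V) :
    (H G).Adj (.inl u) (.inr v) ↔ (u = v ∨ G.Adj u v) := Iff.rfl

lemma H_adj_rl (G : SimpleGraph V) (u v : V) :
    (H G).Adj (.inr u) (.inl v) ↔ (v = u ∨ G.Adj v u) := Iff.rfl

lemma H_adj_rr (G : SimpleGraph V) (u v : V) :
    ¬ (H G).Adj (.inr u) (.inr v) := fun h => h

/-- Old vertices keep the graph structure. -/
def inlHom (G : SimpleGraph V) : G →g H G :=
  ⟨Sum.inl, fun {_ _} h => h⟩

/-- Projection to the original vertex set. -/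
def pr : V ⊕ V → V := Sum.elim id id

lemma proj_adj (G : SimpleGraph V) {a b : V ⊕ V} (h : (H G).Adj a b) :
    pr a = pr b ∨ G.Adj (pr a) (pr b) := by
  rcases a with u | u <;> rcases b with v | v
  · exact Or.inr h
  · rcases (H_adj_lr G u v).mp h with h' | h'
    · exact Or.inl h'
    · exact Or.inr h'
  · rcases (H_adj_rl G u v).mp h with h' | h'
    · exact Or.inl h'.symm
    · exact Or.inr h'.symm
  · exact absurd h (H_adj_rr G u v)

lemma proj_dist (G : SimpleGraph V) (hconn : G.Connected) :
    ∀ {a b : V ⊕ V} (w : (H G).Walk a b), G.dist (pr a) (pr b) ≤ w.length := by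
  intro a b w
  induction w with
  | nil => simp
  | @cons a c b h w' ih =>
    rcases proj_adj G h with h' | h'
    · rw [Walk.length_cons, h']
      omega
    · calc G.dist (pr a) (pr b) ≤ G.dist (pr a) (pr c) + G.dist (pr c) (pr b) :=
            hconn.dist_triangle
        _ ≤ 1 + w'.length := by
            have : G.dist (pr a) (pr c) ≤ 1 := by
              have := SimpleGraph.dist_le h'.toWalk
              simpa using this
            omega
        _ = (Walk.cons h w').length := by rw [Walk.length_cons]; omega

/-- A walk of positive length from `u` to `y` gives a bound on the distance from
the clone of `u` to `y`. -/
lemma edist_inr_inl_le (G : SimpleGraph V) {u y : V} (q : G.Walk u y)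
    (hq : 1 ≤ q.length) : (H G).edist (.inr u) (.inl y) ≤ (q.length : ℕ∞) := by
  cases q with
  | nil => simp at hq
  | @cons _ b _ h q' =>
    have hadj : (H G).Adj (.inr u) (.inl b) := (H_adj_rl G u b).mpr (Or.inr h.symm)
    have hle := SimpleGraph.edist_le (Walk.cons hadj (q'.map (inlHom G)))
    erw [Walk.length_cons, Walk.length_map] at hle
    have hle' : (H G).edist (.inr u) (.inl y) ≤ ((q'.length + 1 : ℕ) : ℕ∞) := hle
    simpa using hle'

lemma edist_le_diam (G : SimpleGraph V) (hconn : G.Connected) (hD : 2 ≤ G.diam) :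
    ∀ a b : V ⊕ V, (H G).edist a b ≤ (G.diam : ℕ∞) := by
  have hEd : G.ediam ≠ ⊤ := SimpleGraph.ediam_ne_top_of_diam_ne_zero (by omega)
  have hdist : ∀ x y : V, (G.dist x y : ℕ∞) ≤ (G.diam : ℕ∞) := fun x y =>
    Nat.cast_le.mpr (SimpleGraph.dist_le_diam hEd)
  -- inl-inl bound
  have hll : ∀ x y : V, (H G).edist (.inl x) (.inl y) ≤ (G.dist x y : ℕ∞) := by
    intro x y
    obtain ⟨p, hp⟩ := hconn.exists_walk_length_eq_dist x y
    have := SimpleGraph.edist_le (p.map (inlHom G))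
    rwa [Walk.length_map, hp] at this
  -- inr-inl bound
  have hrl : ∀ u y : V, (H G).edist (.inr u) (.inl y) ≤ (G.diam : ℕ∞) := by
    intro u y
    by_cases huy : u = y
    · subst huy
      have hadj : (H G).Adj (.inr u) (.inl u) := (H_adj_rl G u u).mpr (Or.inl rfl)
      have := SimpleGraph.edist_le hadj.toWalk
      calc (H G).edist (.inr u) (.inl u) ≤ (hadj.toWalk.length : ℕ∞) := this
        _ ≤ (G.diam : ℕ∞) := by
            rw [Walk.length_cons, Walk.length_nil]
            exact_mod_cast Nat.le_trans (by norm_num) hD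
    · obtain ⟨p, hp⟩ := hconn.exists_walk_length_eq_dist u y
      have hp1 : 1 ≤ p.length := by
        rw [hp]; exact hconn.pos_dist_of_ne huy
      calc (H G).edist (.inr u) (.inl y) ≤ (p.length : ℕ∞) := edist_inr_inl_le G p hp1
        _ = (G.dist u y : ℕ∞) := by rw [hp]
        _ ≤ (G.diam : ℕ∞) := hdist u y
  intro a b
  rcases a with u | u <;> rcases b with v | v
  · exact le_trans (hll u v) (hdist u v)
  · rw [SimpleGraph.edist_comm]; exact hrl v u
  · exact hrl u v
  · by_cases huv : u = v
    · subst huv; simp [SimpleGraph.edist_self]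
    by_cases hA : G.Adj u v
    · -- path inr u — inl u — inr v of length 2
      have h1 : (H G).Adj (.inr u) (.inl u) := (H_adj_rl G u u).mpr (Or.inl rfl)
      have h2 : (H G).Adj (.inl u) (.inr v) := (H_adj_lr G u v).mpr (Or.inr hA)
      have hle := SimpleGraph.edist_le (Walk.cons h1 (Walk.cons h2 Walk.nil))
      simp only [Walk.length_cons, Walk.length_nil] at hle
      exact le_trans hle (by exact_mod_cast hD)
    · obtain ⟨p, hp⟩ := hconn.exists_walk_length_eq_dist u v
      cases p with
      | nil => exact absurd rfl huv
      | @cons _ b _ h q' =>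
        have hbv : b ≠ v := fun hbv => hA (hbv ▸ h)
        have hq1 : 1 ≤ q'.length := by
          rcases Nat.eq_zero_or_pos q'.length with h0 | h0
          · exact absurd (Walk.eq_of_length_eq_zero h0) hbv
          · exact h0
        have h1 : (H G).Adj (.inr u) (.inl b) := (H_adj_rl G u b).mpr (Or.inr h.symm)
        have e1 : (H G).edist (.inr u) (.inl b) ≤ 1 := by
          have := SimpleGraph.edist_le h1.toWalk
          simpa using this
        have e2 : (H G).edist (.inl b) (.inr v) ≤ (q'.length : ℕ∞) := by
          rw [SimpleGraph.edist_comm]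
          have := edist_inr_inl_le G q'.reverse (by rwa [Walk.length_reverse])
          rwa [Walk.length_reverse] at this
        calc (H G).edist (.inr u) (.inr v)
            ≤ (H G).edist (.inr u) (.inl b) + (H G).edist (.inl b) (.inr v) :=
              SimpleGraph.edist_triangle
          _ ≤ 1 + (q'.length : ℕ∞) := add_le_add e1 e2
          _ = ((Walk.cons h q').length : ℕ∞) := by
              rw [Walk.length_cons]; push_cast; ring
          _ = (G.dist u v : ℕ∞) := by rw [hp]
          _ ≤ (G.diam : ℕ∞) := hdist u v

theorem main (G : SimpleGraph V) (hconn : G.Connected) (hD : 2 ≤ G.diam) :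
    (H G).Connected ∧ (H G).diam = G.diam := by
  have hbd := edist_le_diam G hconn hD
  have hreach : ∀ a b : V ⊕ V, (H G).Reachable a b := by
    intro a b
    apply SimpleGraph.reachable_of_edist_ne_top
    exact ne_top_of_le_ne_top (by simp) (hbd a b)
  have hne : Nonempty V := hconn.nonempty
  have hHconn : (H G).Connected := by
    rw [SimpleGraph.connected_iff]
    exact ⟨hreach, inferInstance⟩
  refine ⟨hHconn, ?_⟩
  have hHed : (H G).ediam ≤ (G.diam : ℕ∞) :=
    SimpleGraph.ediam_le_of_edist_le fun u v => hbd u v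
  have hHedT : (H G).ediam ≠ ⊤ := ne_top_of_le_ne_top (by simp) hHed
  have hle : (H G).diam ≤ G.diam := by
    have := ENat.toNat_le_toNat hHed (by simp)
    simpa [SimpleGraph.diam] using this
  have hge : G.diam ≤ (H G).diam := by
    obtain ⟨u, v, huv⟩ := SimpleGraph.exists_dist_eq_diam (G := G)
    obtain ⟨w, hw⟩ := (hreach (.inl u) (.inl v)).exists_walk_length_eq_dist
    have h1 : G.dist u v ≤ (H G).dist (.inl u) (.inl v) := by
      have := proj_dist G hconn w
      rwa [hw] at this
    calc G.diam = G.dist u v := huv.symm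
      _ ≤ (H G).dist (.inl u) (.inl v) := h1
      _ ≤ (H G).diam := SimpleGraph.dist_le_diam hHedT
  omega

end Stmt7Aux

/-- If `G` is connected with `diam(G) ≥ 2` and `H ∈ IIM_1(G)` is
obtained by cloning every vertex, then `H` is connected and `diam(H) = diam(G)`. -/
theorem stmt7 {V : Type} [Fintype V] (G : SimpleGraph V) (hG : G.Connected)
    (hdiam : 2 ≤ G.diam)
    (σ : ∀ i, IterV V i → Bool) (hσ : ∀ v : V, σ 0 v = true) :
    (iimGraph G σ 1).Connected ∧ (iimGraph G σ 1).diam = G.diam := by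
  have hσ0 : σ 0 = fun _ => true := funext fun v => hσ v
  have h1 : iimGraph G σ 1 = Stmt7Aux.H G := by
    show iimStep G (σ 0) = iimStep G (fun _ => true)
    rw [hσ0]
    rfl
  rw [h1]
  exact Stmt7Aux.main G hG hdiam
end

section
/- Let G be a finite simple graph and let D ⊆ V(G) be a dual dominating set of G, i.e., D is a dominating set of G and for every vertex v ∈ V(G) there exists w ∈ D with w ∉ N[v]. Then for every H ∈ IIM_1(G), D is a dual dominating set of H; consequently, for every i ≥ 0 and every H ∈ IIM_i(G), D is a dominating set of H, so dom(H) ≤ |D|. -/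
/-- `D` is a dominating set of `H`: every vertex lies in `D` or is adjacent to a
vertex of `D`. -/
def IsDominating {W : Type} (H : SimpleGraph W) (D : Set W) : Prop :=
  ∀ v : W, v ∈ D ∨ ∃ u ∈ D, H.Adj u v

/-- The domination number of `H`: the least size of a dominating set. -/
noncomputable def domNum {W : Type} (H : SimpleGraph W) : ℕ :=
  sInf {n | ∃ D : Set W, IsDominating H D ∧ D.ncard = n}

/-- `D` is a dual dominating set of `H`: a dominating set such that moreover every
vertex `v` has some `w ∈ D` with `w ∉ N[v]` (i.e. `w ≠ v` and `w` not adjacent to `v`). -/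
def IsDualDominating {W : Type} (H : SimpleGraph W) (D : Set W) : Prop :=
  IsDominating H D ∧ ∀ v : W, ∃ w ∈ D, w ≠ v ∧ ¬ H.Adj w v
lemma dualDominating_iimStep {V : Type} (G : SimpleGraph V) (D : Set V)
    (hD : IsDualDominating G D) (σ : V → Bool) :
    IsDualDominating (iimStep G σ) (Sum.inl '' D) := by
  obtain ⟨hdom, hdual⟩ := hD
  constructor
  · rintro (u | u)
    · rcases hdom u with h | ⟨w, hw, hadj⟩
      · exact Or.inl ⟨u, h, rfl⟩
      · exact Or.inr ⟨Sum.inl w, ⟨w, hw, rfl⟩, hadj⟩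
    · by_cases hσ : σ u = true
      · rcases hdom u with h | ⟨w, hw, hadj⟩
        · refine Or.inr ⟨Sum.inl u, ⟨u, h, rfl⟩, ?_⟩
          show if σ u = true then u = u ∨ G.Adj u u else ¬(u = u ∨ G.Adj u u)
          rw [if_pos hσ]; exact Or.inl rfl
        · refine Or.inr ⟨Sum.inl w, ⟨w, hw, rfl⟩, ?_⟩
          show if σ u = true then w = u ∨ G.Adj w u else ¬(w = u ∨ G.Adj w u)
          rw [if_pos hσ]; exact Or.inr hadj
      · obtain ⟨w, hw, hne, hnadj⟩ := hdual u
        refine Or.inr ⟨Sum.inl w, ⟨w, hw, rfl⟩, ?_⟩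
        show if σ u = true then w = u ∨ G.Adj w u else ¬(w = u ∨ G.Adj w u)
        rw [if_neg hσ]; rintro (h | h); exacts [hne h, hnadj h]
  · rintro (u | u)
    · obtain ⟨w, hw, hne, hnadj⟩ := hdual u
      exact ⟨Sum.inl w, ⟨w, hw, rfl⟩, fun h => hne (Sum.inl.inj h), hnadj⟩
    · by_cases hσ : σ u = true
      · obtain ⟨w, hw, hne, hnadj⟩ := hdual u
        refine ⟨Sum.inl w, ⟨w, hw, rfl⟩, Sum.inl_ne_inr, ?_⟩
        show ¬ if σ u = true then w = u ∨ G.Adj w u else ¬(w = u ∨ G.Adj w u)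
        rw [if_pos hσ]; rintro (h | h); exacts [hne h, hnadj h]
      · rcases hdom u with h | ⟨w, hw, hadj⟩
        · refine ⟨Sum.inl u, ⟨u, h, rfl⟩, Sum.inl_ne_inr, ?_⟩
          show ¬ if σ u = true then u = u ∨ G.Adj u u else ¬(u = u ∨ G.Adj u u)
          rw [if_neg hσ]; exact fun h' => h' (Or.inl rfl)
        · refine ⟨Sum.inl w, ⟨w, hw, rfl⟩, Sum.inl_ne_inr, ?_⟩
          show ¬ if σ u = true then w = u ∨ G.Adj w u else ¬(w = u ∨ G.Adj w u)
          rw [if_neg hσ]; exact fun h' => h' (Or.inr hadj)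

lemma liftV_injective {V : Type} : ∀ l, Function.Injective (fun x : V => liftV x l)
  | 0 => fun _ _ h => h
  | l + 1 => fun a b h => liftV_injective l (Sum.inl.inj h)

lemma dualDominating_iimGraph {V : Type} (G : SimpleGraph V) (D : Set V)
    (hD : IsDualDominating G D) (σ : ∀ j, IterV V j → Bool) :
    ∀ i, IsDualDominating (iimGraph G σ i) ((fun x => liftV x i) '' D)
  | 0 => by rw [show (fun x : V => liftV x 0) '' D = D from Set.image_id D]; exact hD
  | i + 1 => by
    have h := dualDominating_iimStep _ _ (dualDominating_iimGraph G D hD σ i) (σ i)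
    have himg : (fun x : V => liftV x (i + 1)) '' D
        = Sum.inl '' ((fun x => liftV x i) '' D) := by
      rw [Set.image_image]; rfl
    rw [himg]
    exact h

/-- If `D` is a dual dominating set of `G`, then for every
`H ∈ IIM_1(G)` the set `D` is a dual dominating set of `H`; consequently, for every
`i ≥ 0` and every `H ∈ IIM_i(G)`, `D` is a dominating set of `H`, so `dom(H) ≤ |D|`. -/
theorem stmt8 {V : Type} [Fintype V] (G : SimpleGraph V) (D : Set V)
    (hD : IsDualDominating G D) :
    (∀ σ₀ : V → Bool, IsDualDominating (iimStep G σ₀) (Sum.inl '' D)) ∧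
    (∀ (i : ℕ) (σ : ∀ j, IterV V j → Bool),
      IsDominating (iimGraph G σ i) ((fun x => liftV x i) '' D) ∧
        domNum (iimGraph G σ i) ≤ D.ncard) := by
  refine ⟨fun σ₀ => dualDominating_iimStep G D hD σ₀, fun i σ => ?_⟩
  have h := dualDominating_iimGraph G D hD σ i
  refine ⟨h.1, Nat.sInf_le ?_⟩
  exact ⟨(fun x => liftV x i) '' D, h.1,
    Set.ncard_image_of_injective D (liftV_injective i)⟩
end
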